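/- Let r₁, r₂, ε > 0 and set c₁ = −r₁ − ε/2 and c₂ = r₂ + ε/2 (real numbers, identified with points (c₁,0), (c₂,0) on the x-axis). Then there exist real numbers s < t with (s − c₁)(t − c₁) = r₁² and (s − c₂)(t − c₂) = r₂², such that the point (s,0) lies in the open disk B((c₁,0), r₁) and (t,0) lies in the open disk B((c₂,0), r₂). Consequently, writing p₁ = (s,0), p₂ = (t,0) and R_j for the inversion across ∂B((c_j,0), r_j), one has R₁(p₂) = p₁ and R₂(p₁) = p₂. -/

import Mathlib

open Real Filter Metric

noncomputable section

abbrev E2 := EuclideanSpace ℝ (Fin 2)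

/-- The point (a, b) in ℝ². -/
def pt (a b : ℝ) : E2 := (WithLp.equiv 2 (Fin 2 → ℝ)).symm ![a, b]

/-- Inversion (reflection) across the circle ∂B(c, r). -/
def refl2 (c : E2) (r : ℝ) (x : E2) : E2 := (r ^ 2 / ‖x - c‖ ^ 2) • (x - c) + c

lemma pt_apply (a b : ℝ) (i : Fin 2) : pt a b i = ![a, b] i := rfl

lemma pt_sub (a b c d : ℝ) : pt a b - pt c d = pt (a - c) (b - d) := by
  ext i; fin_cases i <;> simp [pt_apply]

lemma pt_smul (k a b : ℝ) : k • pt a b = pt (k * a) (k * b) := by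
  ext i; fin_cases i <;> simp [pt_apply]

lemma pt_add (a b c d : ℝ) : pt a b + pt c d = pt (a + c) (b + d) := by
  ext i; fin_cases i <;> simp [pt_apply]

lemma norm_pt (a : ℝ) : ‖pt a 0‖ = |a| := by
  rw [EuclideanSpace.norm_eq]
  simp [pt_apply, Fin.sum_univ_two, Real.sqrt_sq_eq_abs]

lemma dist_pt (a b : ℝ) : dist (pt a 0) (pt b 0) = |a - b| := by
  rw [dist_eq_norm, pt_sub, show (0:ℝ) - 0 = 0 by ring, norm_pt]

lemma refl2_pt (c r x : ℝ) (hx : x ≠ c) :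
    refl2 (pt c 0) r (pt x 0) = pt (r ^ 2 / (x - c) + c) 0 := by
  have hxc : x - c ≠ 0 := sub_ne_zero.mpr hx
  rw [refl2, pt_sub, show (0:ℝ) - 0 = 0 by ring, norm_pt, sq_abs, pt_smul, pt_add]
  have h1 : r ^ 2 / (x - c) ^ 2 * (x - c) = r ^ 2 / (x - c) := by
    field_simp
  have h2 : r ^ 2 / (x - c) ^ 2 * 0 + 0 = (0:ℝ) := by ring
  rw [h1, h2]

theorem stmt2 (r₁ r₂ ε : ℝ) (hr₁ : 0 < r₁) (hr₂ : 0 < r₂) (hε : 0 < ε) :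
    ∃ s t : ℝ, s < t ∧
      (s - (-r₁ - ε/2)) * (t - (-r₁ - ε/2)) = r₁ ^ 2 ∧
      (s - (r₂ + ε/2)) * (t - (r₂ + ε/2)) = r₂ ^ 2 ∧
      pt s 0 ∈ ball (pt (-r₁ - ε/2) 0) r₁ ∧
      pt t 0 ∈ ball (pt (r₂ + ε/2) 0) r₂ ∧
      refl2 (pt (-r₁ - ε/2) 0) r₁ (pt t 0) = pt s 0 ∧
      refl2 (pt (r₂ + ε/2) 0) r₂ (pt s 0) = pt t 0 := by
  set c₁ : ℝ := -r₁ - ε/2 with hc₁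
  set c₂ : ℝ := r₂ + ε/2 with hc₂
  set d : ℝ := r₁ + r₂ + ε with hd
  have hd0 : 0 < d := by positivity
  set σ : ℝ := ε * (r₂ - r₁) / d with hσ
  set D : ℝ := 8 * ε * (r₁ + r₂ + ε/2) * (r₁ + ε/2) * (r₂ + ε/2) / d ^ 2 with hD
  have hD0 : 0 < D := by positivity
  set w : ℝ := Real.sqrt D with hw
  have hw2 : w ^ 2 = D := Real.sq_sqrt hD0.le
  have hw0 : 0 < w := Real.sqrt_pos.mpr hD0
  refine ⟨(σ - w) / 2, (σ + w) / 2, by linarith, ?_⟩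
  set s : ℝ := (σ - w) / 2 with hs
  set t : ℝ := (σ + w) / 2 with ht
  -- key inequalities
  have hslt : s < -(ε/2) := by
    have hσε : 0 ≤ σ + ε := by
      rw [hσ]
      have : 0 ≤ ε * (r₂ - r₁) / d + ε := by
        rw [div_add' _ _ _ hd0.ne']
        apply div_nonneg _ hd0.le
        nlinarith
      linarith
    have hcore : (ε * (r₂ - r₁) + ε * d) ^ 2 < 8 * ε * (r₁ + r₂ + ε/2) * (r₁ + ε/2) * (r₂ + ε/2) := by
      rw [hd]; nlinarith [mul_pos hr₁ hr₂, mul_pos hr₁ hε, mul_pos hr₂ hε, sq_nonneg ε]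
    have : σ + ε < w := by
      rw [hw, Real.lt_sqrt hσε]
      rw [hσ, hD, div_add' _ _ _ hd0.ne', div_pow, div_lt_div_iff₀ (by positivity) (by positivity)]
      exact (mul_lt_mul_iff_of_pos_right (by positivity)).mpr hcore
    rw [hs]; linarith
  have htgt : ε/2 < t := by
    have hσε : 0 ≤ ε - σ := by
      rw [hσ]
      have : 0 ≤ ε - ε * (r₂ - r₁) / d := by
        rw [sub_div' hd0.ne']
        apply div_nonneg _ hd0.le
        nlinarith
      linarith
    have hcore : (ε * d - ε * (r₂ - r₁)) ^ 2 < 8 * ε * (r₁ + r₂ + ε/2) * (r₁ + ε/2) * (r₂ + ε/2) := by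
      rw [hd]; nlinarith [mul_pos hr₁ hr₂, mul_pos hr₁ hε, mul_pos hr₂ hε, sq_nonneg ε]
    have : ε - σ < w := by
      rw [hw, Real.lt_sqrt hσε]
      rw [hσ, hD, sub_div' hd0.ne', div_pow, div_lt_div_iff₀ (by positivity) (by positivity)]
      exact (mul_lt_mul_iff_of_pos_right (by positivity)).mpr hcore
    rw [ht]; linarith
  -- the two product equations
  have heq1 : (s - c₁) * (t - c₁) = r₁ ^ 2 := by
    have expand : (s - c₁) * (t - c₁) = ((σ - 2 * c₁) ^ 2 - w ^ 2) / 4 := by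
      rw [hs, ht]; ring
    rw [expand, hw2, hσ, hD, hc₁, hd]
    field_simp
    ring
  have heq2 : (s - c₂) * (t - c₂) = r₂ ^ 2 := by
    have expand : (s - c₂) * (t - c₂) = ((σ - 2 * c₂) ^ 2 - w ^ 2) / 4 := by
      rw [hs, ht]; ring
    rw [expand, hw2, hσ, hD, hc₂, hd]
    field_simp
    ring
  clear_value d σ D w s t
  clear hd hσ hD hw hs ht hw2 hw0 hD0 hd0
  -- bounds for ball membership
  have ht1 : r₁ < t - c₁ := by rw [hc₁]; linarith
  have hs1lo : 0 < s - c₁ := by nlinarith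
  have hs1hi : s - c₁ < r₁ := by nlinarith
  have hs2 : c₂ - s > r₂ := by rw [hc₂]; linarith
  have ht2lo : 0 < c₂ - t := by nlinarith
  have ht2hi : c₂ - t < r₂ := by nlinarith
  refine ⟨heq1, heq2, ?_, ?_, ?_, ?_⟩
  · rw [mem_ball, dist_pt, abs_lt]; constructor <;> linarith
  · rw [mem_ball, dist_pt, abs_lt]; constructor <;> linarith
  · have htc : t - c₁ ≠ 0 := by intro h; rw [h] at ht1; linarith
    have hval : r₁ ^ 2 / (t - c₁) + c₁ = s := by
      have htc' : t - c₁ ≠ 0 := by intro h; rw [h] at ht1; linarith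
      field_simp
      linear_combination -heq1
    rw [refl2_pt c₁ r₁ t (fun h => htc (by rw [h]; ring)), hval]
  · have hsc : s - c₂ ≠ 0 := by intro h; linarith
    have hval : r₂ ^ 2 / (s - c₂) + c₂ = t := by
      field_simp
      linear_combination -heq2
    rw [refl2_pt c₂ r₂ s (fun h => hsc (by rw [h]; ring)), hval]
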